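/- With B(z) the unique power series solution of B = z(d-1)(1+B)^{d-1}, B(0)=0, and W = (1+B)^{d-1}, the number of rooted d-regular bipartite planar maps with a marked face and n black vertices satisfies M^{d,f}_n = d·[z^{n-1}] W(z), i.e. the generating series of such maps is z·d·W(z). -/

import Mathlib

/-- An item of a blossoming tree: either a stem or a vertex (`node`) with its ordered
offspring list. Colors are implicit: the root is black and colors alternate
(`true` = black, `false` = white). -/
inductive Item : Type where
  | stem : Item
  | node : List Item → Item

namespace Item

/-- Charge of an item (see the blossoming-tree bijection): `charge c t` where `c` is
the color of the root vertex of `t` if `t` is a node, and the color a child would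
have (negation of the carrying vertex's color) if `t` is a stem; opening stems (at
black vertices) count `-1`, closing stems (at white vertices) count `+1`. -/
def charge : Bool → Item → ℤ
  | c, .stem => if c then 1 else -1
  | _, .node [] => 0
  | c, .node (it :: l) => charge (!c) it + charge c (.node l)

/-- Every non-root vertex in the item has degree `d`. -/
inductive RegularFrom (d : ℕ) : Item → Prop
  | stem : RegularFrom d .stem
  | node (l : List Item) : l.length = d - 1 → (∀ it ∈ l, RegularFrom d it) →
      RegularFrom d (.node l)

/-- Charge conditions at every vertex: black vertices have charge `≤ 1`, white
vertices have charge `≥ 0`. -/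
inductive WellCharged : Bool → Item → Prop
  | stem (c : Bool) : WellCharged c .stem
  | node (c : Bool) (l : List Item) :
      (c = true → charge true (.node l) ≤ 1) →
      (c = false → 0 ≤ charge false (.node l)) →
      (∀ it ∈ l, WellCharged (!c) it) → WellCharged c (.node l)

/-- Number of black vertices among the items of a list whose slots have color `c`. -/
def blackCountList : Bool → List Item → ℕ
  | _, [] => 0
  | c, (.stem :: l) => blackCountList c l
  | c, (.node l' :: l) =>
      ((if c then 1 else 0) + blackCountList (!c) l') + blackCountList c l

end Item

open Item

namespace Aux

lemma charge_node_eq (c : Bool) (l : List Item) :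
    charge c (.node l) = (l.map (charge (!c))).sum := by
  induction l with
  | nil => simp [charge]
  | cons it l ih => simp [charge, ih]

/-- black count of a single item -/
def bc (c : Bool) (it : Item) : ℕ := blackCountList c [it]

lemma bc_stem (c : Bool) : bc c .stem = 0 := by simp [bc, blackCountList]

lemma bc_node (c : Bool) (l : List Item) :
    bc c (.node l) = (if c then 1 else 0) + blackCountList (!c) l := by
  simp [bc, blackCountList]

lemma blackCountList_eq (c : Bool) (l : List Item) :
    blackCountList c l = (l.map (bc c)).sum := by
  induction l with
  | nil => simp [blackCountList]
  | cons it l ih =>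
    cases it with
    | stem => simpa [blackCountList, bc_stem] using ih
    | node l' => simp [blackCountList, bc_node, ih]

lemma sum_dvd_aux (d : ℕ) (c : Bool) (l : List Item)
    (h : ∀ it ∈ l, (d : ℤ) ∣ charge c it - (if c then 1 else -1)) :
    (d : ℤ) ∣ (l.map (charge c)).sum - (l.length : ℤ) * (if c then 1 else -1) := by
  induction l with
  | nil => simp
  | cons it l ih =>
    have h1 := h it (by simp)
    have h2 := ih (fun it hm => h it (by simp [hm]))
    have : (((it :: l).map (charge c)).sum - ((it :: l).length : ℤ) * (if c then 1 else -1))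
        = (charge c it - (if c then 1 else -1))
          + ((l.map (charge c)).sum - (l.length : ℤ) * (if c then 1 else -1)) := by
      cases c <;> simp <;> ring
    rw [this]
    exact dvd_add h1 h2

lemma charge_mod {d : ℕ} (hd : 3 ≤ d) (it : Item) (h : RegularFrom d it) :
    ∀ c : Bool, (d : ℤ) ∣ charge c it - (if c then 1 else -1) := by
  induction h with
  | stem => intro c; cases c <;> simp [charge]
  | node l hlen _ ih =>
    intro c
    have key := sum_dvd_aux d (!c) l (fun it hm => ih it hm (!c))
    rw [charge_node_eq c l]
    have hl : (l.length : ℤ) = (d : ℤ) - 1 := by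
      rw [hlen]; push_cast [Nat.cast_sub (by omega : 1 ≤ d)]; ring
    have hε : ((!c : Bool) → True) := fun _ => trivial
    have : ((l.map (charge (!c))).sum - (if c then 1 else -1))
        = ((l.map (charge (!c))).sum - (l.length : ℤ) * (if (!c) then 1 else -1))
          + ((l.length : ℤ) * (if (!c) then 1 else -1) - (if c then 1 else -1)) := by ring
    rw [this]
    refine dvd_add key ?_
    rw [hl]
    cases c <;> simp <;> ring_nf <;> exact ⟨-1, by ring⟩

end Aux

namespace Aux2
open Aux

lemma charge_true_le_one {it : Item} (h : WellCharged true it) : charge true it ≤ 1 := by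
  cases h with
  | stem => simp [charge]
  | node c l h1 h2 h3 => exact h1 rfl

lemma sum_eq_of_le {l : List ℤ} {a : ℤ} (h : ∀ x ∈ l, x ≤ a)
    (hs : l.sum = (l.length : ℤ) * a) : ∀ x ∈ l, x = a := by
  induction l with
  | nil => simp
  | cons x l ih =>
    have hx : x ≤ a := h x (by simp)
    have hl : l.sum ≤ (l.length : ℤ) * a := by
      have := List.sum_le_card_nsmul l a (fun y hy => h y (by simp [hy]))
      simpa [nsmul_eq_mul] using this
    have hs' : x + l.sum = ((l.length : ℤ) + 1) * a := by
      simp only [List.sum_cons, List.length_cons] at hs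
      push_cast at hs; linarith
    have hxa : x = a := by nlinarith [hl, hx]
    refine fun y hy => ?_
    rcases List.mem_cons.mp hy with rfl | hy'
    · exact hxa
    · exact ih (fun z hz => h z (by simp [hz])) (by linarith [hs']) y hy'

lemma sum_map_neg (l : List ℤ) : (l.map (fun z => -z)).sum = -l.sum := by
  induction l with
  | nil => simp
  | cons x t ih => simp [ih]; ring

lemma sum_ge_of_ge {l : List ℤ} {a : ℤ} (h : ∀ x ∈ l, a ≤ x)
    (hs : l.sum = (l.length : ℤ) * a) : ∀ x ∈ l, x = a := by
  have h' : ∀ x ∈ l.map (fun z => -z), x ≤ -a := by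
    intro x hx
    rcases List.mem_map.mp hx with ⟨y, hy, rfl⟩
    simpa using h y hy
  have hs' : (l.map (fun z => -z)).sum = ((l.map (fun z => -z)).length : ℤ) * (-a) := by
    rw [sum_map_neg, hs]; simp only [List.length_map]; ring
  intro x hx
  have := sum_eq_of_le h' hs' (-x) (List.mem_map.mpr ⟨x, hx, rfl⟩)
  linarith

/-- a well-charged regular white node has charge exactly `d-1`. -/
lemma white_charge {d : ℕ} (hd : 3 ≤ d) {l : List Item}
    (hr : RegularFrom d (.node l)) (hw : WellCharged false (.node l)) :
    charge false (.node l) = (d : ℤ) - 1 := by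
  rcases hr with _ | ⟨_, hlen, hreg⟩
  rcases hw with _ | ⟨_, _, h1, h2, h3⟩
  have hub : charge false (.node l) ≤ (d : ℤ) - 1 := by
    rw [charge_node_eq]
    have := List.sum_le_card_nsmul (l.map (charge true)) 1 (by
      intro x hx
      rcases List.mem_map.mp hx with ⟨y, hy, rfl⟩
      exact charge_true_le_one (by simpa using h3 y hy))
    simp only [nsmul_eq_mul, mul_one, List.length_map] at this
    rw [hlen] at this
    calc ((l.map (charge true)).sum : ℤ) ≤ ((d - 1 : ℕ) : ℤ) := by exact_mod_cast this
      _ = (d : ℤ) - 1 := by push_cast [Nat.cast_sub (by omega : 1 ≤ d)]; ring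
  have hlb : 0 ≤ charge false (.node l) := h2 rfl
  have hmod := charge_mod hd (.node l) (RegularFrom.node l hlen hreg) false
  simp only [if_neg (by simp : ¬ (false = true))] at hmod
  -- d ∣ charge + 1, 1 ≤ charge + 1 ≤ d
  rcases hmod with ⟨q, hq⟩
  have : charge false (.node l) + 1 = (d : ℤ) * q := by linarith [hq]
  have hq1 : q = 1 := by nlinarith [this, hub, hlb, (by exact_mod_cast hd : (3:ℤ) ≤ d)]
  rw [hq1] at this; linarith

/-- children of a well-charged regular white node in a slot with correct total all have
charge true = 1 -/
lemma white_children_charge_one {d : ℕ} (hd : 3 ≤ d) {l : List Item}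
    (hlen : l.length = d - 1)
    (hch : ∀ it ∈ l, WellCharged true it)
    (hsum : (l.map (charge true)).sum = (d : ℤ) - 1) :
    ∀ it ∈ l, charge true it = 1 := by
  have := sum_eq_of_le (l := l.map (charge true)) (a := 1)
    (by intro x hx; rcases List.mem_map.mp hx with ⟨y, hy, rfl⟩
        exact charge_true_le_one (hch y hy))
    (by simp only [List.length_map, hsum, mul_one, hlen]
        push_cast [Nat.cast_sub (by omega : 1 ≤ d)]; ring)
  intro it hit
  exact this _ (List.mem_map.mpr ⟨it, hit, rfl⟩)

end Aux2

namespace Aux3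
open Aux Aux2

def isA (d : ℕ) (it : Item) : Prop :=
  RegularFrom d it ∧ WellCharged true it ∧ charge true it = 1

def isW (d : ℕ) (it : Item) : Prop :=
  RegularFrom d it ∧ WellCharged false it ∧ charge false it = (d : ℤ) - 1

lemma isW_ne_stem {d : ℕ} (hd : 3 ≤ d) {it : Item} (h : isW d it) : it ≠ .stem := by
  rintro rfl
  have := h.2.2
  simp [charge] at this
  have : (3:ℤ) ≤ d := by exact_mod_cast hd
  linarith

lemma stem_or_isW {d : ℕ} (hd : 3 ≤ d) {it : Item}
    (hr : RegularFrom d it) (hw : WellCharged false it) : it = .stem ∨ isW d it := by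
  cases it with
  | stem => exact Or.inl rfl
  | node l => exact Or.inr ⟨hr, hw, white_charge hd hr hw⟩

lemma decomp {d : ℕ} (hd : 3 ≤ d) (l : List Item)
    (h : ∀ it ∈ l, it = .stem ∨ isW d it)
    (hsum : (l.map (charge false)).sum = (d : ℤ) - l.length) :
    ∃ i w j, l = List.replicate i .stem ++ w :: List.replicate j .stem ∧ isW d w := by
  induction l with
  | nil =>
    exfalso
    simp at hsum
    omega
  | cons x t ih =>
    rcases h x (by simp) with rfl | hW
    · have hsum' : (t.map (charge false)).sum = (d : ℤ) - t.length := by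
        simp only [List.map_cons, List.sum_cons, List.length_cons] at hsum
        simp only [charge] at hsum
        push_cast at hsum ⊢
        linarith
      obtain ⟨i, w, j, heq, hw⟩ := ih (fun it hit => h it (by simp [hit])) hsum'
      exact ⟨i + 1, w, j, by simp [heq, List.replicate_succ], hw⟩
    · have hx : charge false x = (d : ℤ) - 1 := hW.2.2
      have hsum' : (t.map (charge false)).sum = ((t.map (charge false)).length : ℤ) * (-1) := by
        simp only [List.map_cons, List.sum_cons, List.length_cons] at hsum
        simp only [List.length_map]
        push_cast at hsum ⊢
        linarith
      have hall : ∀ z ∈ t.map (charge false), (-1 : ℤ) ≤ z := by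
        intro z hz
        rcases List.mem_map.mp hz with ⟨y, hy, rfl⟩
        rcases h y (by simp [hy]) with rfl | hy'
        · simp [charge]
        · rw [hy'.2.2]
          have : (3:ℤ) ≤ d := by exact_mod_cast hd
          linarith
      have hstems : ∀ y ∈ t, y = Item.stem := by
        intro y hy
        rcases h y (by simp [hy]) with rfl | hy'
        · rfl
        · exfalso
          have := sum_ge_of_ge hall hsum' (charge false y)
            (List.mem_map.mpr ⟨y, hy, rfl⟩)
          rw [hy'.2.2] at this
          have : (3:ℤ) ≤ d := by exact_mod_cast hd
          omega
      refine ⟨0, x, t.length, ?_, hW⟩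
      simp only [List.replicate_zero, List.nil_append, List.cons.injEq, true_and]
      exact List.eq_replicate_of_mem hstems

lemma decomp_unique : ∀ (i i' : ℕ) (w w' : Item) (t t' : List Item), w ≠ .stem → w' ≠ .stem →
    List.replicate i .stem ++ w :: t = List.replicate i' .stem ++ w' :: t' →
    i = i' ∧ w = w' ∧ t = t' := by
  intro i
  induction i with
  | zero =>
    intro i' w w' t t' hw hw' heq
    cases i' with
    | zero => simpa using heq
    | succ i' =>
      exfalso
      rw [List.replicate_succ] at heq
      simp at heq
      exact hw heq.1
  | succ i ih =>
    intro i' w w' t t' hw hw' heq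
    cases i' with
    | zero =>
      exfalso
      rw [List.replicate_succ] at heq
      simp at heq
      exact hw' heq.1.symm
    | succ i' =>
      rw [List.replicate_succ, List.replicate_succ] at heq
      simp only [List.cons_append, List.cons.injEq, true_and] at heq
      obtain ⟨h1, h2, h3⟩ := ih i' w w' t t' hw hw' heq
      exact ⟨by omega, h2, h3⟩

lemma charge_sum_sandwich (i j : ℕ) (w : Item) :
    ((List.replicate i Item.stem ++ w :: List.replicate j Item.stem).map (charge false)).sum
      = charge false w - i - j := by
  have hst : charge false Item.stem = -1 := by simp [Item.charge]
  simp [List.map_append, List.sum_append, List.map_replicate, List.sum_replicate,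
    hst, nsmul_eq_mul]
  ring

lemma bc_sum_sandwich (c : Bool) (i j : ℕ) (w : Item) :
    blackCountList c (List.replicate i Item.stem ++ w :: List.replicate j Item.stem) = bc c w := by
  rw [blackCountList_eq]
  simp [List.map_append, List.map_replicate, List.sum_replicate, bc_stem]

end Aux3

namespace Aux4
open Aux Aux2 Aux3

def Aset (d k : ℕ) : Set Item := {it | isA d it ∧ bc true it = k}
def Wset (d k : ℕ) : Set Item := {it | isW d it ∧ bc false it = k}
def Lset (d m k : ℕ) : Set (List Item) :=
  {l | l.length = m ∧ (∀ it ∈ l, isA d it) ∧ blackCountList true l = k}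

lemma W_node_mem {d k : ℕ} (hd : 3 ≤ d) {l : List Item}
    (h : Item.node l ∈ Wset d k) : l ∈ Lset d (d-1) k := by
  obtain ⟨⟨hr, hw, hc⟩, hbc⟩ := h
  have hr' := hr
  rcases hr' with _ | ⟨_, hlen, hreg⟩
  have hw' := hw
  rcases hw' with _ | ⟨_, _, h1, h2, h3⟩
  have h3' : ∀ it ∈ l, WellCharged true it := by
    intro it hit; simpa using h3 it hit
  have hsum : (l.map (charge true)).sum = (d : ℤ) - 1 := by
    have h' := (charge_node_eq false l).symm.trans hc
    simpa using h'
  have hone := white_children_charge_one hd hlen h3' hsum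
  refine ⟨hlen, fun it hit => ⟨hreg it hit, h3' it hit, hone it hit⟩, ?_⟩
  rw [bc_node] at hbc
  simpa using hbc

lemma node_mem_W {d k : ℕ} (hd : 3 ≤ d) {l : List Item}
    (h : l ∈ Lset d (d-1) k) : Item.node l ∈ Wset d k := by
  obtain ⟨hlen, hA, hbc⟩ := h
  have hch : charge false (Item.node l) = (d : ℤ) - 1 := by
    rw [charge_node_eq]
    have : ∀ x ∈ l.map (charge true), x = 1 := by
      intro x hx; rcases List.mem_map.mp hx with ⟨y, hy, rfl⟩
      exact (hA y hy).2.2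
    have := List.sum_eq_card_nsmul _ 1 this
    simp only [nsmul_eq_mul, mul_one, List.length_map, hlen] at this
    rw [show ((!false : Bool)) = true from rfl, this]
    push_cast [Nat.cast_sub (by omega : 1 ≤ d)]; ring
  have hreg : RegularFrom d (Item.node l) :=
    RegularFrom.node l hlen (fun it hit => (hA it hit).1)
  have hwc : WellCharged false (Item.node l) := by
    refine WellCharged.node false l (by simp) ?_ ?_
    · intro _
      rw [hch]
      have : (3:ℤ) ≤ d := by exact_mod_cast hd
      linarith
    · intro it hit; simpa using (hA it hit).2.1
  refine ⟨⟨hreg, hwc, hch⟩, ?_⟩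
  rw [bc_node]
  simpa using hbc

lemma isW_node {d : ℕ} (hd : 3 ≤ d) {it : Item} (h : isW d it) : ∃ l, it = Item.node l := by
  cases it with
  | stem => exact absurd rfl (isW_ne_stem hd h)
  | node l => exact ⟨l, rfl⟩

lemma stem_mem_A {d : ℕ} : Item.stem ∈ Aset d 0 :=
  ⟨⟨RegularFrom.stem, WellCharged.stem true, by simp [Item.charge]⟩, bc_stem true⟩

lemma node_A_pos {d k : ℕ} {l : List Item} (h : Item.node l ∈ Aset d k) : 1 ≤ k := by
  have h2 := h.2
  rw [bc_node] at h2
  simp at h2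
  omega

/-- decomposition of a black node of charge 1 -/
lemma A_node_decomp {d k : ℕ} (hd : 3 ≤ d) {l : List Item}
    (h : Item.node l ∈ Aset d k) :
    ∃ i w j, l = List.replicate i Item.stem ++ w :: List.replicate j Item.stem ∧
      i + 1 + j = d - 1 ∧ w ∈ Wset d (k - 1) := by
  obtain ⟨⟨hr, hw, hc⟩, hbc⟩ := h
  have hr' := hr
  rcases hr' with _ | ⟨_, hlen, hreg⟩
  have hw' := hw
  rcases hw' with _ | ⟨_, _, h1, h2, h3⟩
  have h3' : ∀ it ∈ l, WellCharged false it := by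
    intro it hit; simpa using h3 it hit
  have hOr : ∀ it ∈ l, it = Item.stem ∨ isW d it :=
    fun it hit => stem_or_isW hd (hreg it hit) (h3' it hit)
  have hsum : (l.map (charge false)).sum = (d : ℤ) - l.length := by
    have h' : (l.map (charge false)).sum = 1 := by
      simpa [hc] using (charge_node_eq true l).symm
    rw [h', hlen]
    push_cast [Nat.cast_sub (by omega : 1 ≤ d)]
    ring
  obtain ⟨i, w, j, heq, hWw⟩ := decomp hd l hOr hsum
  have hlen' : i + 1 + j = d - 1 := by
    have := hlen
    rw [heq] at this
    simp [List.length_append, List.length_replicate] at this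
    omega
  have hbcw : bc false w = k - 1 ∧ 1 ≤ k := by
    rw [bc_node] at hbc
    rw [heq, bc_sum_sandwich] at hbc
    simp at hbc
    omega
  exact ⟨i, w, j, heq, hlen', hWw, hbcw.1⟩

/-- building a black node of charge 1 from a position and a white tree -/
lemma A_node_build {d k : ℕ} (hd : 3 ≤ d) {w : Item} (hw : w ∈ Wset d k)
    (i j : ℕ) (hij : i + 1 + j = d - 1) :
    Item.node (List.replicate i Item.stem ++ w :: List.replicate j Item.stem)
      ∈ Aset d (k + 1) := by
  set l := List.replicate i Item.stem ++ w :: List.replicate j Item.stem with hl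
  have hlen : l.length = d - 1 := by
    simp [hl, List.length_append, List.length_replicate]
    omega
  have hmem : ∀ it ∈ l, it = Item.stem ∨ it = w := by
    intro it hit
    rw [hl] at hit
    rcases List.mem_append.mp hit with h' | h'
    · exact Or.inl (List.eq_of_mem_replicate h')
    · rcases List.mem_cons.mp h' with rfl | h''
      · exact Or.inr rfl
      · exact Or.inl (List.eq_of_mem_replicate h'')
  have hreg : RegularFrom d (Item.node l) := by
    refine RegularFrom.node l hlen ?_
    intro it hit
    rcases hmem it hit with rfl | rfl
    · exact RegularFrom.stem
    · exact hw.1.1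
  have hch : charge true (Item.node l) = 1 := by
    have h' : charge true (Item.node l) = (l.map (charge false)).sum := by
      simpa using charge_node_eq true l
    rw [h', hl, charge_sum_sandwich, hw.1.2.2]
    have hcast : (i : ℤ) + 1 + (j : ℤ) = (d : ℤ) - 1 := by omega
    linarith
  have hwc : WellCharged true (Item.node l) := by
    refine WellCharged.node true l (fun _ => by rw [hch]) (by simp) ?_
    intro it hit
    rcases hmem it hit with rfl | rfl
    · exact WellCharged.stem _
    · simpa using hw.1.2.1
  refine ⟨⟨hreg, hwc, hch⟩, ?_⟩
  rw [bc_node, hl]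
  rw [show ((!true : Bool)) = false from rfl, bc_sum_sandwich, hw.2]
  simp [Nat.add_comm]

end Aux4

namespace Aux5
open Aux Aux2 Aux3 Aux4

def Rset (d n : ℕ) : Set (List Item) :=
  {l | l.length = d ∧ (∀ it ∈ l, RegularFrom d it) ∧
    WellCharged true (.node l) ∧ charge true (.node l) = 0 ∧
    1 + blackCountList false l = n}

lemma R_decomp {d n : ℕ} (hd : 3 ≤ d) {l : List Item} (h : l ∈ Rset d n) :
    ∃ i w j, l = List.replicate i Item.stem ++ w :: List.replicate j Item.stem ∧
      i + 1 + j = d ∧ w ∈ Wset d (n - 1) ∧ 1 ≤ n := by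
  obtain ⟨hlen, hreg, hw, hc, hbc⟩ := h
  rcases hw with _ | ⟨_, _, h1, h2, h3⟩
  have h3' : ∀ it ∈ l, WellCharged false it := by
    intro it hit; simpa using h3 it hit
  have hOr : ∀ it ∈ l, it = Item.stem ∨ isW d it :=
    fun it hit => stem_or_isW hd (hreg it hit) (h3' it hit)
  have hsum : (l.map (charge false)).sum = (d : ℤ) - l.length := by
    have h' : (l.map (charge false)).sum = 0 := by
      simpa [hc] using (charge_node_eq true l).symm
    rw [h', hlen]
    ring
  obtain ⟨i, w, j, heq, hWw⟩ := decomp hd l hOr hsum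
  have hlen' : i + 1 + j = d := by
    have h5 := hlen
    rw [heq] at h5
    simp [List.length_append, List.length_replicate] at h5
    omega
  have hbcw : bc false w = n - 1 ∧ 1 ≤ n := by
    rw [heq, bc_sum_sandwich] at hbc
    omega
  exact ⟨i, w, j, heq, hlen', ⟨hWw, hbcw.1⟩, hbcw.2⟩

lemma R_build {d k : ℕ} (hd : 3 ≤ d) {w : Item} (hw : w ∈ Wset d k)
    (i j : ℕ) (hij : i + 1 + j = d) :
    (List.replicate i Item.stem ++ w :: List.replicate j Item.stem) ∈ Rset d (k + 1) := by
  set l := List.replicate i Item.stem ++ w :: List.replicate j Item.stem with hl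
  have hlen : l.length = d := by
    simp [hl, List.length_append, List.length_replicate]
    omega
  have hmem : ∀ it ∈ l, it = Item.stem ∨ it = w := by
    intro it hit
    rw [hl] at hit
    rcases List.mem_append.mp hit with h' | h'
    · exact Or.inl (List.eq_of_mem_replicate h')
    · rcases List.mem_cons.mp h' with rfl | h''
      · exact Or.inr rfl
      · exact Or.inl (List.eq_of_mem_replicate h'')
  have hreg : ∀ it ∈ l, RegularFrom d it := by
    intro it hit
    rcases hmem it hit with rfl | rfl
    · exact RegularFrom.stem
    · exact hw.1.1
  have hch : charge true (Item.node l) = 0 := by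
    have h' : charge true (Item.node l) = (l.map (charge false)).sum := by
      simpa using charge_node_eq true l
    rw [h', hl, charge_sum_sandwich, hw.1.2.2]
    have hcast : (i : ℤ) + 1 + (j : ℤ) = (d : ℤ) := by omega
    linarith
  have hwc : WellCharged true (Item.node l) := by
    refine WellCharged.node true l (fun _ => by rw [hch]; omega) (by simp) ?_
    intro it hit
    rcases hmem it hit with rfl | rfl
    · exact WellCharged.stem _
    · simpa using hw.1.2.1
  refine ⟨hlen, hreg, hwc, hch, ?_⟩
  rw [hl, bc_sum_sandwich, hw.2]
  omega

end Aux5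

namespace Aux6
open Aux Aux2 Aux3 Aux4 Aux5

lemma bc_le_blackCountList {c : Bool} {it : Item} {l : List Item} (h : it ∈ l) :
    bc c it ≤ blackCountList c l := by
  rw [blackCountList_eq]
  exact List.single_le_sum (fun x _ => Nat.zero_le x) _ (List.mem_map.mpr ⟨it, h, rfl⟩)

lemma blackCountList_cons (c : Bool) (it : Item) (l : List Item) :
    blackCountList c (it :: l) = bc c it + blackCountList c l := by
  rw [blackCountList_eq, blackCountList_eq, List.map_cons, List.sum_cons]

lemma finite_lists {S : Set Item} (hS : S.Finite) :
    ∀ m, {l : List Item | l.length = m ∧ ∀ it ∈ l, it ∈ S}.Finite := by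
  intro m
  induction m with
  | zero =>
    refine Set.Finite.subset (Set.finite_singleton ([] : List Item)) ?_
    rintro l ⟨hl, -⟩
    simp [List.length_eq_zero_iff.mp hl]
  | succ m ih =>
    refine Set.Finite.subset ((hS.prod ih).image (fun p : Item × List Item => p.1 :: p.2)) ?_
    rintro l ⟨hl, hmem⟩
    cases l with
    | nil => simp at hl
    | cons x t =>
      refine ⟨(x, t), ⟨hmem x (by simp), by simp at hl; exact ⟨hl, fun it hit => hmem it (by simp [hit])⟩⟩, rfl⟩

lemma finite_A {d : ℕ} (hd : 3 ≤ d) : ∀ k, (Aset d k).Finite := by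
  intro k
  induction k using Nat.strong_induction_on with
  | _ k ih =>
  cases k with
  | zero =>
    refine Set.Finite.subset (Set.finite_singleton Item.stem) ?_
    intro it hit
    cases it with
    | stem => simp
    | node l => exact absurd (node_A_pos hit) (by omega)
  | succ k =>
    have hAle : {it | isA d it ∧ bc true it ≤ k}.Finite := by
      have heq : {it | isA d it ∧ bc true it ≤ k}
          = ⋃ j ∈ Finset.range (k+1), Aset d j := by
        ext it
        simp only [Set.mem_setOf_eq, Set.mem_iUnion, Finset.mem_range, Finset.mem_coe]
        constructor
        · rintro ⟨h1, h2⟩; exact ⟨bc true it, by omega, h1, rfl⟩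
        · rintro ⟨j, hj, h1, h2⟩; exact ⟨h1, by omega⟩
      rw [heq]
      exact Set.Finite.biUnion (Finset.finite_toSet _) (fun j hj => ih j (by
        simp at hj; omega))
    have hLfin : (Lset d (d-1) k).Finite := by
      refine Set.Finite.subset (finite_lists hAle (d-1)) ?_
      rintro l ⟨h1, h2, h3⟩
      exact ⟨h1, fun it hit => ⟨h2 it hit, by
        have := bc_le_blackCountList (c := true) hit
        omega⟩⟩
    have hWfin : (Wset d k).Finite := by
      refine Set.Finite.subset (hLfin.image Item.node) ?_
      intro w hw
      obtain ⟨l, rfl⟩ := isW_node hd hw.1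
      exact ⟨l, W_node_mem hd hw, rfl⟩
    refine Set.Finite.subset (((Set.finite_Iio d).prod hWfin).image
      (fun p : ℕ × Item => Item.node
        (List.replicate p.1 Item.stem ++ p.2 :: List.replicate (d-2-p.1) Item.stem))) ?_
    intro it hit
    obtain ⟨l, rfl⟩ : ∃ l, it = Item.node l := by
      cases it with
      | stem => exact absurd hit.2 (by rw [bc_stem]; omega)
      | node l => exact ⟨l, rfl⟩
    obtain ⟨i, w, j, heq, hij, hWw⟩ := A_node_decomp hd hit
    refine ⟨(i, w), ⟨by simp; omega, by simpa using hWw⟩, ?_⟩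
    simp only [heq]
    have : d - 2 - i = j := by omega
    rw [this]

lemma finite_W {d : ℕ} (hd : 3 ≤ d) (k : ℕ) : (Wset d k).Finite := by
  have hLfin : (Lset d (d-1) k).Finite := by
    have hAle : {it | isA d it ∧ bc true it ≤ k}.Finite := by
      have heq : {it | isA d it ∧ bc true it ≤ k}
          = ⋃ j ∈ Finset.range (k+1), Aset d j := by
        ext it
        simp only [Set.mem_setOf_eq, Set.mem_iUnion, Finset.mem_range, Finset.mem_coe]
        constructor
        · rintro ⟨h1, h2⟩; exact ⟨bc true it, by omega, h1, rfl⟩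
        · rintro ⟨j, hj, h1, h2⟩; exact ⟨h1, by omega⟩
      rw [heq]
      exact Set.Finite.biUnion (Finset.finite_toSet _) (fun j hj => finite_A hd j)
    refine Set.Finite.subset (finite_lists hAle (d-1)) ?_
    rintro l ⟨h1, h2, h3⟩
    exact ⟨h1, fun it hit => ⟨h2 it hit, by
      have := bc_le_blackCountList (c := true) hit
      omega⟩⟩
  refine Set.Finite.subset (hLfin.image Item.node) ?_
  intro w hw
  obtain ⟨l, rfl⟩ := isW_node hd hw.1
  exact ⟨l, W_node_mem hd hw, rfl⟩

lemma finite_L {d : ℕ} (hd : 3 ≤ d) (m k : ℕ) : (Lset d m k).Finite := by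
  have hAle : {it | isA d it ∧ bc true it ≤ k}.Finite := by
    have heq : {it | isA d it ∧ bc true it ≤ k}
        = ⋃ j ∈ Finset.range (k+1), Aset d j := by
      ext it
      simp only [Set.mem_setOf_eq, Set.mem_iUnion, Finset.mem_range, Finset.mem_coe]
      constructor
      · rintro ⟨h1, h2⟩; exact ⟨bc true it, by omega, h1, rfl⟩
      · rintro ⟨j, hj, h1, h2⟩; exact ⟨h1, by omega⟩
    rw [heq]
    exact Set.Finite.biUnion (Finset.finite_toSet _) (fun j hj => finite_A hd j)
  refine Set.Finite.subset (finite_lists hAle m) ?_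
  rintro l ⟨h1, h2, h3⟩
  exact ⟨h1, fun it hit => ⟨h2 it hit, by
    have := bc_le_blackCountList (c := true) hit
    omega⟩⟩

end Aux6

namespace Aux7
open Aux Aux2 Aux3 Aux4 Aux5 Aux6

lemma card_A_zero {d : ℕ} (hd : 3 ≤ d) : Nat.card (Aset d 0) = 1 := by
  have : Aset d 0 = {Item.stem} := by
    ext it
    constructor
    · intro hit
      cases it with
      | stem => simp
      | node l => exact absurd (node_A_pos hit) (by omega)
    · rintro rfl; exact stem_mem_A
  rw [Nat.card_coe_set_eq, this, Set.ncard_singleton]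

lemma card_W_eq_L {d : ℕ} (hd : 3 ≤ d) (k : ℕ) :
    Nat.card (Wset d k) = Nat.card (Lset d (d-1) k) := by
  refine (Nat.card_eq_of_bijective
    (fun l => ⟨Item.node l.1, node_mem_W hd l.2⟩ : Lset d (d-1) k → Wset d k) ?_).symm
  constructor
  · rintro ⟨l, hl⟩ ⟨l', hl'⟩ h
    simp only [Subtype.mk.injEq, Item.node.injEq] at h
    exact Subtype.ext h
  · rintro ⟨w, hw⟩
    obtain ⟨l, rfl⟩ := isW_node hd hw.1
    exact ⟨⟨l, W_node_mem hd hw⟩, rfl⟩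

lemma card_A_succ {d : ℕ} (hd : 3 ≤ d) (k : ℕ) :
    Nat.card (Aset d (k+1)) = (d - 1) * Nat.card (Wset d k) := by
  have hbij : Function.Bijective
      (fun p : Fin (d-1) × Wset d k =>
        (⟨Item.node (List.replicate p.1.1 Item.stem ++ p.2.1 ::
            List.replicate (d-2-p.1.1) Item.stem),
          A_node_build hd p.2.2 p.1.1 (d-2-p.1.1) (by omega)⟩ : Aset d (k+1))) := by
    constructor
    · rintro ⟨⟨i, hi⟩, ⟨w, hw⟩⟩ ⟨⟨i', hi'⟩, ⟨w', hw'⟩⟩ h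
      simp only [Subtype.mk.injEq, Item.node.injEq] at h
      obtain ⟨h1, h2, h3⟩ := decomp_unique i i' w w' _ _
        (isW_ne_stem hd hw.1) (isW_ne_stem hd hw'.1) h
      simp [h1, h2]
    · rintro ⟨it, hit⟩
      obtain ⟨l, rfl⟩ : ∃ l, it = Item.node l := by
        cases it with
        | stem => exact absurd hit.2 (by rw [bc_stem]; omega)
        | node l => exact ⟨l, rfl⟩
      obtain ⟨i, w, j, heq, hij, hWw⟩ := A_node_decomp hd hit
      have hWw' : w ∈ Wset d k := by simpa using hWw
      refine ⟨⟨⟨i, by omega⟩, ⟨w, hWw'⟩⟩, ?_⟩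
      simp only [Subtype.mk.injEq, Item.node.injEq]
      rw [heq]
      have : d - 2 - i = j := by omega
      rw [this]
  rw [← Nat.card_eq_of_bijective _ hbij, Nat.card_prod]
  congr 1
  rw [Nat.card_eq_fintype_card, Fintype.card_fin]

lemma card_R {d n : ℕ} (hd : 3 ≤ d) (hn : 1 ≤ n) :
    Nat.card {l : List Item //
        l.length = d ∧ (∀ it ∈ l, RegularFrom d it) ∧
        WellCharged true (.node l) ∧ charge true (.node l) = 0 ∧
        1 + blackCountList false l = n} = d * Nat.card (Wset d (n-1)) := by
  have hmemiff : ∀ l : List Item, (l.length = d ∧ (∀ it ∈ l, RegularFrom d it) ∧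
      WellCharged true (.node l) ∧ charge true (.node l) = 0 ∧
      1 + blackCountList false l = n) ↔ l ∈ Rset d n := by
    intro l; rfl
  have hbij : Function.Bijective
      (fun p : Fin d × Wset d (n-1) =>
        (⟨(List.replicate p.1.1 Item.stem ++ p.2.1 ::
            List.replicate (d-1-p.1.1) Item.stem),
          by
            have := R_build hd p.2.2 p.1.1 (d-1-p.1.1) (by have := p.1.2; omega)
            rw [hmemiff]
            have hn' : n - 1 + 1 = n := by omega
            rwa [hn'] at this⟩ :
          {l : List Item // l.length = d ∧ (∀ it ∈ l, RegularFrom d it) ∧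
            WellCharged true (.node l) ∧ charge true (.node l) = 0 ∧
            1 + blackCountList false l = n})) := by
    constructor
    · rintro ⟨⟨i, hi⟩, ⟨w, hw⟩⟩ ⟨⟨i', hi'⟩, ⟨w', hw'⟩⟩ h
      simp only [Subtype.mk.injEq] at h
      obtain ⟨h1, h2, h3⟩ := decomp_unique i i' w w' _ _
        (isW_ne_stem hd hw.1) (isW_ne_stem hd hw'.1) h
      simp [h1, h2]
    · rintro ⟨l, hl⟩
      rw [hmemiff] at hl
      obtain ⟨i, w, j, heq, hij, hWw, hn1⟩ := R_decomp hd hl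
      refine ⟨⟨⟨i, by omega⟩, ⟨w, hWw⟩⟩, ?_⟩
      simp only [Subtype.mk.injEq]
      rw [heq]
      have : d - 1 - i = j := by omega
      rw [this]
  rw [← Nat.card_eq_of_bijective _ hbij, Nat.card_prod]
  congr 1
  rw [Nat.card_eq_fintype_card, Fintype.card_fin]

lemma card_L_zero {d k : ℕ} (hd : 3 ≤ d) :
    Nat.card (Lset d 0 k) = if k = 0 then 1 else 0 := by
  rcases Nat.eq_zero_or_pos k with rfl | hk
  · have : Lset d 0 0 = {([] : List Item)} := by
      ext l
      constructor
      · rintro ⟨h1, -, -⟩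
        simp [List.length_eq_zero_iff.mp h1]
      · rintro rfl
        exact ⟨rfl, by simp, by simp [blackCountList]⟩
    rw [Nat.card_coe_set_eq, this, Set.ncard_singleton, if_pos rfl]
  · have : Lset d 0 k = (∅ : Set (List Item)) := by
      ext l
      simp only [Set.mem_empty_iff_false, iff_false]
      rintro ⟨h1, -, h3⟩
      rw [List.length_eq_zero_iff.mp h1] at h3
      simp [blackCountList] at h3
      omega
    rw [Nat.card_coe_set_eq, this, Set.ncard_empty, if_neg (by omega)]

lemma card_L_succ {d : ℕ} (hd : 3 ≤ d) (m k : ℕ) :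
    Nat.card (Lset d (m+1) k) =
      ∑ p ∈ Finset.HasAntidiagonal.antidiagonal k, Nat.card (Aset d p.1) * Nat.card (Lset d m p.2) := by
  classical
  have hbij : Function.Bijective
      (fun q : (Σ p : Finset.HasAntidiagonal.antidiagonal k, Aset d p.1.1 × Lset d m p.1.2) =>
        (⟨q.2.1.1 :: q.2.2.1, by
          obtain ⟨⟨⟨i, j⟩, hp⟩, ⟨it, hit⟩, ⟨l, hl⟩⟩ := q
          rw [Finset.HasAntidiagonal.mem_antidiagonal] at hp
          refine ⟨by simp [hl.1], ?_, ?_⟩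
          · intro x hx
            rcases List.mem_cons.mp hx with rfl | hx'
            · exact hit.1
            · exact hl.2.1 x hx'
          · rw [blackCountList_cons, hit.2, hl.2.2]
            simpa using hp⟩ : Lset d (m+1) k)) := by
    constructor
    · rintro ⟨⟨⟨i, j⟩, hp⟩, ⟨it, hit⟩, ⟨l, hl⟩⟩ ⟨⟨⟨i', j'⟩, hp'⟩, ⟨it', hit'⟩, ⟨l', hl'⟩⟩ h
      simp only [Subtype.mk.injEq, List.cons.injEq] at h
      obtain ⟨rfl, rfl⟩ := h
      have hi : i = i' := hit.2.symm.trans hit'.2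
      have hj : j = j' := hl.2.2.symm.trans hl'.2.2
      subst hi; subst hj
      rfl
    · rintro ⟨l, hl⟩
      cases l with
      | nil =>
        obtain ⟨h1, -, -⟩ := hl
        simp at h1
      | cons it t =>
        obtain ⟨h1, h2, h3⟩ := hl
        rw [blackCountList_cons] at h3
        refine ⟨⟨⟨(bc true it, blackCountList true t), by
            rw [Finset.HasAntidiagonal.mem_antidiagonal]; exact h3⟩,
          ⟨it, ⟨h2 it (by simp), rfl⟩⟩, ⟨t, ⟨by simpa using h1,
            fun x hx => h2 x (by simp [hx]), rfl⟩⟩⟩, rfl⟩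
  rw [← Nat.card_eq_of_bijective _ hbij]
  letI : ∀ (p : Finset.HasAntidiagonal.antidiagonal k), Fintype (Aset d (p.1.1) × Lset d m (p.1.2)) := by
    intro p
    have h1 := (finite_A hd p.1.1).to_subtype
    have h2 := (finite_L hd m p.1.2).to_subtype
    exact Fintype.ofFinite _
  rw [Nat.card_eq_fintype_card, Fintype.card_sigma,
    ← Finset.sum_coe_sort (Finset.HasAntidiagonal.antidiagonal k)
      (fun p => Nat.card (Aset d p.1) * Nat.card (Lset d m p.2))]
  refine Finset.sum_congr rfl ?_
  intro p _
  rw [← Nat.card_eq_fintype_card, Nat.card_prod]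

end Aux7

namespace Aux8
open Aux Aux2 Aux3 Aux4 Aux5 Aux6 Aux7 PowerSeries

lemma coeff_pow_congr {F G : PowerSeries ℚ} (m : ℕ) :
    ∀ k : ℕ, (∀ j ≤ k, coeff j F = coeff j G) → coeff k (F ^ m) = coeff k (G ^ m) := by
  induction m with
  | zero => intro k _; rfl
  | succ m ih =>
    intro k hk
    rw [pow_succ, pow_succ, coeff_mul, coeff_mul]
    refine Finset.sum_congr rfl ?_
    intro p hp
    rw [Finset.HasAntidiagonal.mem_antidiagonal] at hp
    rw [ih p.1 (fun j hj => hk j (by omega)), hk p.2 (by omega)]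

variable {d : ℕ}

noncomputable def alpha (d : ℕ) : PowerSeries ℚ :=
  PowerSeries.mk (fun k => (Nat.card (Aset d k) : ℚ))

lemma coeff_alpha (k : ℕ) : coeff k (alpha d) = (Nat.card (Aset d k) : ℚ) := by
  simp [alpha]

lemma coeff_alpha_pow (hd : 3 ≤ d) (m : ℕ) :
    ∀ k : ℕ, coeff k ((alpha d) ^ m) = (Nat.card (Lset d m k) : ℚ) := by
  induction m with
  | zero =>
    intro k
    rw [pow_zero, coeff_one, card_L_zero hd]
    split <;> simp
  | succ m ih =>
    intro k
    rw [pow_succ', coeff_mul, card_L_succ hd m k, Nat.cast_sum]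
    refine Finset.sum_congr rfl ?_
    intro p hp
    rw [coeff_alpha, ih p.2, Nat.cast_mul]

lemma alpha_eq (hd : 3 ≤ d) (B : PowerSeries ℚ)
    (hB0 : PowerSeries.constantCoeff B = 0)
    (hBeq : B = ((d : ℚ) - 1) • (PowerSeries.X * (1 + B) ^ (d - 1))) :
    alpha d = 1 + B := by
  ext k
  induction k using Nat.strong_induction_on with
  | _ k ih =>
  cases k with
  | zero =>
    rw [coeff_alpha, card_A_zero hd, map_add]
    simp [coeff_zero_eq_constantCoeff, hB0]
  | succ k =>
    have h1B : coeff (k+1) (1 + B) = ((d:ℚ) - 1) * coeff k ((1 + B) ^ (d-1)) := by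
      rw [map_add, coeff_one, if_neg (by omega)]
      nth_rewrite 1 [hBeq]
      rw [map_smul, coeff_succ_X_mul]
      simp [smul_eq_mul]
    have h2 : coeff k ((1 + B) ^ (d-1)) = coeff k ((alpha d) ^ (d-1)) :=
      coeff_pow_congr (d-1) k (fun j hj => (ih j (by omega)).symm)
    rw [h1B, h2, coeff_alpha_pow hd, coeff_alpha, card_A_succ hd, card_W_eq_L hd,
      Nat.cast_mul]
    congr 1
    push_cast [Nat.cast_sub (by omega : 1 ≤ d)]
    ring

end Aux8


/-- Generating-series form of the count of `d`-regular bipartite plane maps: with `B`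
the power series solution of `B = z(d-1)(1+B)^{d-1}`, `B(0)=0`, and
`W = (1+B)^{d-1}`, and assuming (the blossoming-tree bijection) that `M^{d,f}_n`, the
number of black-rooted `d`-regular bipartite planar maps with a marked face and `n`
black vertices, equals the number of black-rooted well-charged `d`-regular blossoming
trees of charge `0` with `n` black vertices (a tree being encoded by the ordered
offspring list of its root), one has `M^{d,f}_n = d · [z^{n-1}] W(z)`, i.e. the
generating series of such maps is `z·d·W(z)`. -/
theorem marked_maps_generating_series (d : ℕ) (hd : 3 ≤ d)
    (B : PowerSeries ℚ) (hB0 : PowerSeries.constantCoeff B = 0)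
    (hBeq : B = ((d : ℚ) - 1) • (PowerSeries.X * (1 + B) ^ (d - 1)))
    (Mf : ℕ → ℕ)
    (hbij : ∀ n : ℕ, 1 ≤ n →
      Mf n = Nat.card {l : List Item //
        l.length = d ∧ (∀ it ∈ l, RegularFrom d it) ∧
        WellCharged true (.node l) ∧ charge true (.node l) = 0 ∧
        1 + blackCountList false l = n}) :
    ∀ n : ℕ, 1 ≤ n →
      (Mf n : ℚ) = (d : ℚ) * PowerSeries.coeff (n - 1) ((1 + B) ^ (d - 1)) := by
  intro n hn
  have hα := Aux8.alpha_eq hd B hB0 hBeq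
  have hc : PowerSeries.coeff (n-1) ((1+B)^(d-1))
      = (Nat.card (Aux4.Wset d (n-1)) : ℚ) := by
    rw [← hα, Aux8.coeff_alpha_pow hd, ← Aux7.card_W_eq_L hd]
  rw [hc, hbij n hn, Aux7.card_R hd hn]
  push_cast
  ring
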